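/- With the setup of the previous statement, drop(X) := mst(G[R]) − mst(G[R]/X) equals the maximum value 2·∑_{S ∈ 𝒮̃} d^S over all drop certificates 𝒮̃ for X. In particular, the value of every drop certificate for X is a lower bound on drop(X). -/

import Mathlib

namespace Stmt13Aux

open Relation

set_option linter.unusedSectionVars false

variable {V : Type*} [MetricSpace V] [Fintype V]

/-- threshold relation -/
def dRel (R : Finset V) (t : ℝ) : V → V → Prop :=
  fun a b => a ∈ R ∧ b ∈ R ∧ dist a b ≤ 2 * t

/-- component of s at time t -/
def cmp (R : Finset V) (t : ℝ) (s : V) : Set V :=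
  {s' | s' ∈ R ∧ ReflTransGen (dRel R t) s s'}

lemma dRel_symm (R : Finset V) (t : ℝ) : Symmetric (dRel R t) := by
  intro a b ⟨ha, hb, hd⟩; exact ⟨hb, ha, by rwa [dist_comm]⟩

lemma mem_R_of_mem_cmp {R : Finset V} {t : ℝ} {s z : V} (h : z ∈ cmp R t s) : z ∈ R := h.1

lemma mem_cmp_self {R : Finset V} {s : V} (hs : s ∈ R) (t : ℝ) : s ∈ cmp R t s :=
  ⟨hs, ReflTransGen.refl⟩

lemma cmp_eq_of_mem {R : Finset V} {t : ℝ} {s a : V} (ha : a ∈ cmp R t s) :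
    cmp R t a = cmp R t s := by
  obtain ⟨haR, hrtg⟩ := ha
  ext z
  constructor
  · rintro ⟨hzR, hz⟩; exact ⟨hzR, hrtg.trans hz⟩
  · rintro ⟨hzR, hz⟩
    exact ⟨hzR, ((show Symmetric (ReflTransGen (dRel R t)) from fun a b h => (@ReflTransGen.stdSymm _ _ ⟨dRel_symm R t⟩).symm a b h) hrtg).trans hz⟩

lemma cmp_mono {R : Finset V} {t t' : ℝ} (h : t ≤ t') (s : V) : cmp R t s ⊆ cmp R t' s := by
  rintro z ⟨hzR, hz⟩
  refine ⟨hzR, ReflTransGen.mono ?_ _ _ hz⟩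
  rintro a b ⟨ha, hb, hd⟩
  exact ⟨ha, hb, hd.trans (by linarith)⟩

lemma cmp_laminar {R : Finset V} {t t' : ℝ} {s s' z : V}
    (hz : z ∈ cmp R t s) (hz' : z ∈ cmp R t' s') :
    cmp R t s ⊆ cmp R t' s' ∨ cmp R t' s' ⊆ cmp R t s := by
  rcases le_total t t' with h | h
  · left
    rw [← cmp_eq_of_mem hz, ← cmp_eq_of_mem hz']
    exact cmp_mono h z
  · right
    rw [← cmp_eq_of_mem hz, ← cmp_eq_of_mem hz']
    exact cmp_mono h z

lemma cmp_zero_subset {R : Finset V} {s : V} : cmp R 0 s ⊆ {s} := by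
  rintro z ⟨hzR, hz⟩
  clear hzR
  induction hz with
  | refl => rfl
  | @tail b c hsb hbc ih =>
    obtain ⟨hb, hc, hd⟩ := hbc
    have hd0 : dist b c = 0 := le_antisymm (by linarith) dist_nonneg
    have hbceq : b = c := by rwa [dist_eq_zero] at hd0
    subst hbceq; exact ih

/-- deactivation time -/
noncomputable def deact (R : Finset V) (S : Set V) : ℝ :=
  sSup {t : ℝ | 0 ≤ t ∧ ∃ s ∈ R, S = cmp R t s}

/-- crossing edges are expensive -/
lemma deact_le_half_dist {R : Finset V} {S : Set V} {a b : V}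
    (ha : a ∈ S) (hbR : b ∈ R) (hb : b ∉ S) :
    2 * deact R S ≤ dist a b := by
  have h : deact R S ≤ dist a b / 2 := by
    apply Real.sSup_le
    · rintro u ⟨hu0, s, hsR, hS⟩
      by_contra hlt
      push_neg at hlt
      have hd : dist a b ≤ 2 * u := by linarith
      have haR : a ∈ R := by rw [hS] at ha; exact ha.1
      have : b ∈ cmp R u a := ⟨hbR, ReflTransGen.single ⟨haR, hbR, hd⟩⟩
      rw [hS] at ha
      rw [cmp_eq_of_mem ha, ← hS] at this
      exact hb this
    · positivity
  linarith


/-! ### generic ReflTransGen lemmas -/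

section RTG
variable {α : Type*}

/-- split a walk at uses of a distinguished symmetric edge {a,b} -/
lemma rtg_split (r r' : α → α → Prop) (a b : α)
    (hsym : Symmetric r')
    (hsub : ∀ u v, r u v → r' u v ∨ (u = a ∧ v = b) ∨ (u = b ∧ v = a)) :
    ∀ p q, ReflTransGen r p q →
      ReflTransGen r' p q ∨
        ((ReflTransGen r' p a ∨ ReflTransGen r' p b) ∧
         (ReflTransGen r' q a ∨ ReflTransGen r' q b)) := by
  intro p q h
  induction h with
  | refl => exact Or.inl ReflTransGen.refl
  | @tail c q hpc hcq ih =>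
    rcases hsub _ _ hcq with h' | ⟨rfl, rfl⟩ | ⟨rfl, rfl⟩
    · rcases ih with ih | ⟨ihp, ihc⟩
      · exact Or.inl (ih.tail h')
      · refine Or.inr ⟨ihp, ?_⟩
        rcases ihc with h1 | h1
        · exact Or.inl ((ReflTransGen.single (hsym h')).trans h1)
        · exact Or.inr ((ReflTransGen.single (hsym h')).trans h1)
    · rcases ih with ih | ⟨ihp, _⟩
      · exact Or.inr ⟨Or.inl ih, Or.inr ReflTransGen.refl⟩
      · exact Or.inr ⟨ihp, Or.inr ReflTransGen.refl⟩
    · rcases ih with ih | ⟨ihp, _⟩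
      · exact Or.inr ⟨Or.inr ih, Or.inl ReflTransGen.refl⟩
      · exact Or.inr ⟨ihp, Or.inl ReflTransGen.refl⟩

/-- a walk from inside C to outside C has a step leaving C -/
lemma rtg_exit (r : α → α → Prop) (C : α → Prop) :
    ∀ p q, ReflTransGen r p q → C p → ¬ C q → ∃ u v, r u v ∧ C u ∧ ¬ C v := by
  intro p q h hp hq
  induction h with
  | refl => exact absurd hp hq
  | @tail c q hpc hcq ih =>
    by_cases hc : C c
    · exact ⟨c, q, hcq, hc, hq⟩
    · exact ih hc

/-- goodness propagation -/
lemma rtg_good (r s : α → α → Prop) (good : α → Prop)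
    (hr : ∀ u v, r u v → good u → good v)
    (hs : ∀ u v, s u v → good v) :
    ∀ p q, ReflTransGen (fun u v => r u v ∨ s u v) p q → good p → good q := by
  intro p q h hp
  induction h with
  | refl => exact hp
  | @tail c q hpc hcq ih =>
    rcases hcq with h' | h'
    · exact hr _ _ h' ih
    · exact hs _ _ h'

/-- absorb extra steps already implied by RTG of r -/
lemma rtg_absorb (r s : α → α → Prop)
    (hs : ∀ u v, s u v → ReflTransGen r u v) :
    ∀ p q, ReflTransGen (fun u v => r u v ∨ s u v) p q → ReflTransGen r p q := by
  intro p q h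
  induction h with
  | refl => exact ReflTransGen.refl
  | @tail c q hpc hcq ih =>
    rcases hcq with h' | h'
    · exact ih.tail h'
    · exact ih.trans (hs _ _ h')

end RTG

/-! ### the MST value -/

/-- the set of achievable connection values with X' contracted -/
def mcSet (R X' : Finset V) : Set ℝ :=
  { v : ℝ | ∃ E : Finset (V × V),
      (∀ e ∈ E, e.1 ∈ R ∧ e.2 ∈ R) ∧
      (∀ s₁ ∈ R, ∀ s₂ ∈ R, Relation.ReflTransGen
        (fun a b => ((a, b) ∈ E ∨ (b, a) ∈ E) ∨ (a ∈ X' ∧ b ∈ X')) s₁ s₂) ∧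
      v = ∑ e ∈ E, dist e.1 e.2 }

noncomputable def Mc (R X' : Finset V) : ℝ := sInf (mcSet R X')

lemma mcSet_nonempty (R : Finset V) (hR : R.Nonempty) (X' : Finset V) :
    (mcSet R X').Nonempty := by
  refine ⟨∑ e ∈ R ×ˢ R, dist e.1 e.2, R ×ˢ R, ?_, ?_, rfl⟩
  · intro e he
    rw [Finset.mem_product] at he
    exact he
  · intro s₁ h₁ s₂ h₂
    exact ReflTransGen.single (Or.inl (Or.inl (Finset.mem_product.mpr ⟨h₁, h₂⟩)))

lemma mcSet_finite (R X' : Finset V) : (mcSet R X').Finite := by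
  apply Set.Finite.subset (Set.Finite.image (fun E : Finset (V × V) => ∑ e ∈ E, dist e.1 e.2)
    ((R ×ˢ R).powerset : Finset (Finset (V × V))).finite_toSet)
  rintro v ⟨E, hwf, _, rfl⟩
  refine ⟨E, ?_, rfl⟩
  simp only [Finset.coe_powerset, Set.mem_preimage, Set.mem_powerset_iff, Finset.coe_subset,
    Finset.mem_coe, Finset.mem_powerset]
  intro e he
  exact Finset.mem_product.mpr (hwf e he)

lemma isLeast_Mc (R : Finset V) (hR : R.Nonempty) (X' : Finset V) :
    IsLeast (mcSet R X') (Mc R X') := by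
  constructor
  · exact Set.Nonempty.csInf_mem (mcSet_nonempty R hR X') (mcSet_finite R X')
  · intro v hv
    exact csInf_le (Set.Finite.bddBelow (mcSet_finite R X')) hv

/-- contracting a subsingleton is the same as contracting nothing -/
lemma mcSet_subsingleton_eq (R : Finset V) (X' : Finset V) (hX' : ∀ a ∈ X', ∀ b ∈ X', a = b)
    (X'' : Finset V) (hX'' : ∀ a ∈ X'', ∀ b ∈ X'', a = b) :
    mcSet R X' = mcSet R X'' := by
  have key : ∀ (Y : Finset V), (∀ a ∈ Y, ∀ b ∈ Y, a = b) → ∀ (E : Finset (V × V)) (s₁ s₂ : V),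
      ReflTransGen (fun a b => ((a, b) ∈ E ∨ (b, a) ∈ E) ∨ (a ∈ Y ∧ b ∈ Y)) s₁ s₂ →
      ReflTransGen (fun a b : V => (a, b) ∈ E ∨ (b, a) ∈ E) s₁ s₂ := by
    intro Y hY E s₁ s₂ h
    refine rtg_absorb _ _ ?_ _ _ h
    rintro u v ⟨hu, hv⟩
    have : u = v := hY u hu v hv
    subst this; exact ReflTransGen.refl
  ext v
  constructor <;> rintro ⟨E, hwf, hconn, rfl⟩
  · refine ⟨E, hwf, fun s₁ h₁ s₂ h₂ => ?_, rfl⟩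
    exact ReflTransGen.mono (fun a b h => Or.inl h) _ _ (key X' hX' E s₁ s₂ (hconn s₁ h₁ s₂ h₂))
  · refine ⟨E, hwf, fun s₁ h₁ s₂ h₂ => ?_, rfl⟩
    exact ReflTransGen.mono (fun a b h => Or.inl h) _ _ (key X'' hX'' E s₁ s₂ (hconn s₁ h₁ s₂ h₂))


/-! ### surgery: removing a crossing edge while keeping contracted connectivity -/

section Surgery

variable {W : Type*} [DecidableEq (W × W)]

def relE (E : Finset (W × W)) (base : W → W → Prop) : W → W → Prop :=
  fun a b => ((a, b) ∈ E ∨ (b, a) ∈ E) ∨ base a b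

def baseXY (base : W → W → Prop) (x y : W) : W → W → Prop :=
  fun u v => base u v ∨ ((u = x ∧ v = y) ∨ (u = y ∧ v = x))

lemma relE_symm (E : Finset (W × W)) (base : W → W → Prop) (hb : Symmetric base) :
    Symmetric (relE E base) := by
  rintro a b (h | h)
  · exact Or.inl h.symm
  · exact Or.inr (hb h)

lemma baseXY_symm (base : W → W → Prop) (x y : W) (hb : Symmetric base) :
    Symmetric (baseXY base x y) := by
  rintro a b (h | (⟨h1, h2⟩ | ⟨h1, h2⟩))
  · exact Or.inl (hb h)
  · exact Or.inr (Or.inr ⟨h2, h1⟩)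
  · exact Or.inr (Or.inl ⟨h2, h1⟩)

lemma relE_mono {E E' : Finset (W × W)} {base base' : W → W → Prop}
    (hE : E ⊆ E') (hb : ∀ u v, base u v → base' u v) :
    ∀ u v, relE E base u v → relE E' base' u v := by
  rintro u v ((h | h) | h)
  · exact Or.inl (Or.inl (hE h))
  · exact Or.inl (Or.inr (hE h))
  · exact Or.inr (hb u v h)

lemma surgery (S : Set W) (base : W → W → Prop) (hbsymm : Symmetric base)
    (hbS : ∀ u v, base u v → (u ∈ S ↔ v ∈ S)) (x y : W) (hx : x ∈ S) (hy : y ∉ S) :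
    ∀ (n : ℕ) (E : Finset (W × W)), E.card = n →
      ReflTransGen (relE E base) x y →
      ∃ e ∈ E, ((e.1 ∈ S ∧ e.2 ∉ S) ∨ (e.2 ∈ S ∧ e.1 ∉ S)) ∧
        ReflTransGen (relE (E.erase e) (baseXY base x y)) x e.1 ∧
        ReflTransGen (relE (E.erase e) (baseXY base x y)) x e.2 ∧
        (∀ z, ReflTransGen (relE E base) x z →
          ReflTransGen (relE (E.erase e) (baseXY base x y)) x z) := by
  intro n
  induction n using Nat.strong_induction_on with
  | _ n IH =>
    intro E hcard hxy
    -- find a crossing edge f ∈ E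
    obtain ⟨u, v, huv, hu, hv⟩ := rtg_exit (relE E base) (· ∈ S) x y hxy hx hy
    have hfex : ∃ f ∈ E, ((f.1 ∈ S ∧ f.2 ∉ S) ∨ (f.2 ∈ S ∧ f.1 ∉ S)) := by
      rcases huv with (h | h) | h
      · exact ⟨(u, v), h, Or.inl ⟨hu, hv⟩⟩
      · exact ⟨(v, u), h, Or.inr ⟨hu, hv⟩⟩
      · exact absurd ((hbS u v h).mp hu) hv
    obtain ⟨f, hfE, hfcross⟩ := hfex
    -- the split lemma hypothesis for an edge e ∈ E
    have hsub : ∀ e : W × W, ∀ u v, relE E base u v →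
        relE (E.erase e) base u v ∨ (u = e.1 ∧ v = e.2) ∨ (u = e.2 ∧ v = e.1) := by
      rintro e u v ((h | h) | h)
      · by_cases heq : (u, v) = e
        · exact Or.inr (Or.inl ⟨congrArg Prod.fst heq, congrArg Prod.snd heq⟩)
        · exact Or.inl (Or.inl (Or.inl (Finset.mem_erase.mpr ⟨heq, h⟩)))
      · by_cases heq : (v, u) = e
        · exact Or.inr (Or.inr ⟨congrArg Prod.snd heq, congrArg Prod.fst heq⟩)
        · exact Or.inl (Or.inl (Or.inr (Finset.mem_erase.mpr ⟨heq, h⟩)))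
      · exact Or.inl (Or.inr h)
    have hsymm' : ∀ E' : Finset (W × W), Symmetric (relE E' base) :=
      fun E' => relE_symm E' base hbsymm
    by_cases hcase : ReflTransGen (relE (E.erase f) base) x y
    · -- recurse on the smaller edge set
      have hlt : (E.erase f).card < n := by
        rw [← hcard]; exact Finset.card_erase_lt_of_mem hfE
      obtain ⟨e, he, hecross, hex1, hex2, hcov⟩ :=
        IH (E.erase f).card hlt (E.erase f) rfl hcase
      have hEsub : (E.erase f).erase e ⊆ E.erase e := by
        intro a ha
        rw [Finset.mem_erase] at ha ⊢
        exact ⟨ha.1, (Finset.mem_erase.mp ha.2).2⟩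
      have hlift : ∀ p q, ReflTransGen (relE ((E.erase f).erase e) (baseXY base x y)) p q →
          ReflTransGen (relE (E.erase e) (baseXY base x y)) p q :=
        fun p q h => ReflTransGen.mono (relE_mono hEsub (fun _ _ h => h)) _ _ h
      have hr'T : ∀ p q, ReflTransGen (relE (E.erase e) base) p q →
          ReflTransGen (relE (E.erase e) (baseXY base x y)) p q :=
        fun p q h => ReflTransGen.mono (relE_mono (fun a ha => ha) (fun u v h => Or.inl h)) _ _ h
      have hsymr' : Symmetric (ReflTransGen (relE (E.erase e) base)) := fun a b h => (@ReflTransGen.stdSymm _ _ ⟨hsymm' (E.erase e)⟩).symm a b h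
      refine ⟨e, Finset.mem_of_mem_erase he, hecross, hlift _ _ hex1, hlift _ _ hex2, ?_⟩
      intro z hz
      rcases rtg_split (relE E base) (relE (E.erase e) base) e.1 e.2
          (hsymm' _) (hsub e) x z hz with h | ⟨_, hz'⟩
      · exact hr'T _ _ h
      · rcases hz' with h1 | h1
        · exact (hlift _ _ hex1).trans (hr'T _ _ (hsymr' h1))
        · exact (hlift _ _ hex2).trans (hr'T _ _ (hsymr' h1))
    · -- f itself is the edge to remove
      have hsymr' : Symmetric (ReflTransGen (relE (E.erase f) base)) := fun a b h => (@ReflTransGen.stdSymm _ _ ⟨hsymm' (E.erase f)⟩).symm a b h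
      have hr'T : ∀ p q, ReflTransGen (relE (E.erase f) base) p q →
          ReflTransGen (relE (E.erase f) (baseXY base x y)) p q :=
        fun p q h => ReflTransGen.mono (relE_mono (fun a ha => ha) (fun u v h => Or.inl h)) _ _ h
      have hxyT : ReflTransGen (relE (E.erase f) (baseXY base x y)) x y :=
        ReflTransGen.single (Or.inr (Or.inr (Or.inl ⟨rfl, rfl⟩)))
      rcases rtg_split (relE E base) (relE (E.erase f) base) f.1 f.2
          (hsymm' _) (hsub f) x y hxy with h | ⟨hxp, hyp⟩
      · exact absurd h hcase
      have key : (ReflTransGen (relE (E.erase f) base) x f.1 ∧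
            ReflTransGen (relE (E.erase f) base) y f.2) ∨
          (ReflTransGen (relE (E.erase f) base) x f.2 ∧
            ReflTransGen (relE (E.erase f) base) y f.1) := by
        rcases hxp with hx1 | hx2 <;> rcases hyp with hy1 | hy2
        · exact absurd (hx1.trans (hsymr' hy1)) hcase
        · exact Or.inl ⟨hx1, hy2⟩
        · exact Or.inr ⟨hx2, hy1⟩
        · exact absurd (hx2.trans (hsymr' hy2)) hcase
      have hex1 : ReflTransGen (relE (E.erase f) (baseXY base x y)) x f.1 := by
        rcases key with ⟨ha, hb⟩ | ⟨ha, hb⟩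
        · exact hr'T _ _ ha
        · exact hxyT.trans (hr'T _ _ hb)
      have hex2 : ReflTransGen (relE (E.erase f) (baseXY base x y)) x f.2 := by
        rcases key with ⟨ha, hb⟩ | ⟨ha, hb⟩
        · exact hxyT.trans (hr'T _ _ hb)
        · exact hr'T _ _ ha
      refine ⟨f, hfE, hfcross, hex1, hex2, ?_⟩
      intro z hz
      rcases rtg_split (relE E base) (relE (E.erase f) base) f.1 f.2
          (hsymm' _) (hsub f) x z hz with h | ⟨_, hz'⟩
      · exact hr'T _ _ h
      · rcases hz' with h1 | h1
        · exact hex1.trans (hr'T _ _ (hsymr' h1))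
        · exact hex2.trans (hr'T _ _ (hsymr' h1))

end Surgery

/-! ### step lemma : removing a terminal from the contracted set -/

variable [DecidableEq V] [DecidableEq (V × V)]

lemma step_lemma (R : Finset V) (hR : R.Nonempty) (X' : Finset V) (hX'R : X' ⊆ R)
    (x y : V) (hx : x ∈ X') (hy : y ∈ X') (hxy : x ≠ y)
    (S : Set V) (hxS : x ∈ S) (hyS : y ∉ S) (hSX2 : ∀ z ∈ X'.erase x, z ∉ S) :
    Mc R X' + 2 * deact R S ≤ Mc R (X'.erase x) := by
  obtain ⟨E, hwf, hconn, hsum⟩ := (isLeast_Mc R hR (X'.erase x)).1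
  set base : V → V → Prop := fun a b => a ∈ X'.erase x ∧ b ∈ X'.erase x with hbase
  have hbsymm : Symmetric base := by rintro a b ⟨h1, h2⟩; exact ⟨h2, h1⟩
  have hbS : ∀ u v, base u v → (u ∈ S ↔ v ∈ S) := by
    rintro u v ⟨h1, h2⟩
    simp [hSX2 u h1, hSX2 v h2]
  have hxR : x ∈ R := hX'R hx
  have hyR : y ∈ R := hX'R hy
  have hconn' : ∀ z ∈ R, ReflTransGen (relE E base) x z := fun z hz => hconn x hxR z hz
  obtain ⟨e, heE, hecross, -, -, hcov⟩ :=
    surgery S base hbsymm hbS x y hxS hyS E.card E rfl (hconn' y hyR)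
  -- the reduced edge set connects R with X' contracted
  have hTlift : ∀ p q, ReflTransGen (relE (E.erase e) (baseXY base x y)) p q →
      ReflTransGen (relE (E.erase e) (fun a b => a ∈ X' ∧ b ∈ X')) p q := by
    intro p q h
    refine ReflTransGen.mono (relE_mono (fun a ha => ha) ?_) _ _ h
    rintro u v (⟨h1, h2⟩ | (⟨rfl, rfl⟩ | ⟨rfl, rfl⟩))
    · exact ⟨Finset.mem_of_mem_erase h1, Finset.mem_of_mem_erase h2⟩
    · exact ⟨hx, hy⟩
    · exact ⟨hy, hx⟩
  have hTsymm : Symmetric (ReflTransGen (relE (E.erase e) (baseXY base x y))) := fun a b h =>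
    (@ReflTransGen.stdSymm _ _ ⟨relE_symm (E.erase e) (baseXY base x y) (baseXY_symm base x y hbsymm)⟩).symm a b h
  have hmem : (∑ e' ∈ E.erase e, dist e'.1 e'.2) ∈ mcSet R X' := by
    refine ⟨E.erase e, fun e' he' => hwf e' (Finset.mem_of_mem_erase he'), ?_, rfl⟩
    intro s₁ h₁ s₂ h₂
    have c₁ := hcov s₁ (hconn' s₁ h₁)
    have c₂ := hcov s₂ (hconn' s₂ h₂)
    exact hTlift _ _ ((hTsymm c₁).trans c₂)
  have hle : Mc R X' ≤ ∑ e' ∈ E.erase e, dist e'.1 e'.2 := (isLeast_Mc R hR X').2 hmem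
  have hErase : ∑ e' ∈ E.erase e, dist e'.1 e'.2 =
      (∑ e' ∈ E, dist e'.1 e'.2) - dist e.1 e.2 := Finset.sum_erase_eq_sub heE
  have hdist : 2 * deact R S ≤ dist e.1 e.2 := by
    rcases hecross with ⟨h1, h2⟩ | ⟨h1, h2⟩
    · exact deact_le_half_dist h1 (hwf e heE).2 h2
    · rw [dist_comm]
      exact deact_le_half_dist h1 (hwf e heE).1 h2
  rw [hErase, ← hsum] at hle
  linarith

/-! ### add lemma : adding back a terminal to the contracted set -/

lemma add_lemma (R : Finset V) (hR : R.Nonempty) (X' : Finset V) (hX'R : X' ⊆ R)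
    (x y : V) (hx : x ∈ X') (hy : y ∈ X') (hxy : x ≠ y) (τ : ℝ) (hτ : 0 ≤ τ)
    (hchain : ReflTransGen (dRel R τ) x y) :
    Mc R (X'.erase x) ≤ Mc R X' + 2 * τ := by
  obtain ⟨E, hwf, hconn, hsum⟩ := (isLeast_Mc R hR X').1
  set X₂ := X'.erase x with hX₂
  set rel₂ : V → V → Prop := relE E (fun a b => a ∈ X₂ ∧ b ∈ X₂) with hrel₂
  have hy₂ : y ∈ X₂ := Finset.mem_erase.mpr ⟨Ne.symm hxy, hy⟩
  have hsymm₂ : Symmetric (ReflTransGen rel₂) := fun a b h =>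
    (@ReflTransGen.stdSymm _ _ ⟨relE_symm E (fun a b : V => a ∈ X₂ ∧ b ∈ X₂) (fun a b h => ⟨h.2, h.1⟩)⟩).symm a b h
  have hxR : x ∈ R := hX'R hx
  -- every point of R is rel₂-connected to x or to y
  have hgood : ∀ z ∈ R, ReflTransGen rel₂ x z ∨ ReflTransGen rel₂ y z := by
    intro z hz
    have h := hconn x hxR z hz
    have hdec : ReflTransGen (fun u v => rel₂ u v ∨
        (u ∈ X' ∧ v ∈ X' ∧ (u = x ∨ v = x))) x z := by
      refine ReflTransGen.mono ?_ _ _ h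
      rintro u v ((h' | h') | ⟨h1, h2⟩)
      · exact Or.inl (Or.inl (Or.inl h'))
      · exact Or.inl (Or.inl (Or.inr h'))
      · by_cases hu : u = x
        · exact Or.inr ⟨h1, h2, Or.inl hu⟩
        · by_cases hv : v = x
          · exact Or.inr ⟨h1, h2, Or.inr hv⟩
          · exact Or.inl (Or.inr ⟨Finset.mem_erase.mpr ⟨hu, h1⟩, Finset.mem_erase.mpr ⟨hv, h2⟩⟩)
    refine rtg_good _ _ (fun w => ReflTransGen rel₂ x w ∨ ReflTransGen rel₂ y w) ?_ ?_
      x z hdec (Or.inl ReflTransGen.refl)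
    · rintro u v huv (h' | h')
      · exact Or.inl (h'.tail huv)
      · exact Or.inr (h'.tail huv)
    · rintro u v ⟨h1, h2, h3⟩
      by_cases hv : v = x
      · subst hv; exact Or.inl ReflTransGen.refl
      · refine Or.inr (ReflTransGen.single (Or.inr ⟨hy₂, Finset.mem_erase.mpr ⟨hv, h2⟩⟩))
  by_cases hbridge : ReflTransGen rel₂ x y
  · -- no new edge needed
    have hmem : (∑ e' ∈ E, dist e'.1 e'.2) ∈ mcSet R X₂ := by
      refine ⟨E, hwf, ?_, rfl⟩
      intro s₁ h₁ s₂ h₂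
      have c : ∀ w ∈ R, ReflTransGen rel₂ x w := by
        intro w hw
        rcases hgood w hw with h' | h'
        · exact h'
        · exact hbridge.trans h'
      exact (hsymm₂ (c s₁ h₁)).trans (c s₂ h₂)
    have := (isLeast_Mc R hR X₂).2 hmem
    rw [← hsum] at this
    linarith
  · -- find an exit edge along the chain from x to y
    obtain ⟨u, v, ⟨huR, hvR, hd⟩, hCu, hCv⟩ :=
      rtg_exit (dRel R τ) (fun w => ReflTransGen rel₂ x w) x y hchain ReflTransGen.refl hbridge
    have hvy : ReflTransGen rel₂ y v := by
      rcases hgood v hvR with h' | h'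
      · exact absurd h' hCv
      · exact h'
    set E' := insert (u, v) E with hE'
    set rel₂' : V → V → Prop := relE E' (fun a b => a ∈ X₂ ∧ b ∈ X₂) with hrel₂'
    have hlift : ∀ p q, ReflTransGen rel₂ p q → ReflTransGen rel₂' p q := by
      intro p q h
      exact ReflTransGen.mono (relE_mono (Finset.subset_insert _ _) (fun _ _ h => h)) _ _ h
    have hsymm₂' : Symmetric (ReflTransGen rel₂') := fun a b h =>
      (@ReflTransGen.stdSymm _ _ ⟨relE_symm E' (fun a b : V => a ∈ X₂ ∧ b ∈ X₂) (fun a b h => ⟨h.2, h.1⟩)⟩).symm a b h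
    have hstep : ReflTransGen rel₂' u v :=
      ReflTransGen.single (Or.inl (Or.inl (Finset.mem_insert_self _ _)))
    have hbridge' : ReflTransGen rel₂' x y :=
      ((hlift _ _ hCu).trans hstep).trans (hsymm₂' (hlift _ _ hvy))
    have hmem : (∑ e' ∈ E', dist e'.1 e'.2) ∈ mcSet R X₂ := by
      refine ⟨E', ?_, ?_, rfl⟩
      · intro e' he'
        rcases Finset.mem_insert.mp he' with h' | h'
        · subst h'; exact ⟨huR, hvR⟩
        · exact hwf e' h'
      · intro s₁ h₁ s₂ h₂
        have c : ∀ w ∈ R, ReflTransGen rel₂' x w := by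
          intro w hw
          rcases hgood w hw with h' | h'
          · exact hlift _ _ h'
          · exact hbridge'.trans (hlift _ _ h')
        exact (hsymm₂' (c s₁ h₁)).trans (c s₂ h₂)
    have hle := (isLeast_Mc R hR X₂).2 hmem
    have hsum' : ∑ e' ∈ E', dist e'.1 e'.2 ≤ (∑ e' ∈ E, dist e'.1 e'.2) + 2 * τ := by
      by_cases hmemE : (u, v) ∈ E
      · rw [hE', Finset.insert_eq_self.mpr hmemE]
        have : (0:ℝ) ≤ 2 * τ := by linarith
        linarith
      · rw [hE', Finset.sum_insert hmemE]
        simp only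
        linarith
    rw [← hsum] at hsum'
    linarith

/-! ### merge times -/

noncomputable def mergeT (R : Finset V) (x y : V) : ℝ :=
  sInf {t : ℝ | 0 ≤ t ∧ y ∈ cmp R t x}

lemma mergeT_set_nonempty {R : Finset V} {x y : V} (hx : x ∈ R) (hy : y ∈ R) :
    {t : ℝ | 0 ≤ t ∧ y ∈ cmp R t x}.Nonempty := by
  refine ⟨dist x y / 2, by positivity, hy, ReflTransGen.single ⟨hx, hy, by linarith⟩⟩

lemma mergeT_nonneg (R : Finset V) (x y : V) : 0 ≤ mergeT R x y :=
  Real.sInf_nonneg (fun t ht => ht.1)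

lemma mergeT_le {R : Finset V} {x y : V} {t : ℝ} (ht : 0 ≤ t) (h : y ∈ cmp R t x) :
    mergeT R x y ≤ t :=
  csInf_le ⟨0, fun u hu => hu.1⟩ ⟨ht, h⟩

lemma mergeT_mem {R : Finset V} {x y : V} (hx : x ∈ R) (hy : y ∈ R) :
    y ∈ cmp R (mergeT R x y) x := by
  classical
  set m := mergeT R x y with hm
  have hm0 : 0 ≤ m := mergeT_nonneg R x y
  have hne := mergeT_set_nonempty (R := R) hx hy
  have key : ∃ t₁, (0 ≤ t₁ ∧ y ∈ cmp R t₁ x) ∧ ∀ a b, dRel R t₁ a b → dRel R m a b := by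
    set B := (R ×ˢ R).filter (fun p => 2 * m < dist p.1 p.2) with hB
    by_cases hBne : B.Nonempty
    · set δ := (B.image (fun p => dist p.1 p.2 / 2)).min' (hBne.image _) with hδ
      have hmδ : m < δ := by
        have hmem := (B.image (fun p => dist p.1 p.2 / 2)).min'_mem (hBne.image _)
        rw [Finset.mem_image] at hmem
        obtain ⟨p, hp, hpδ⟩ := hmem
        rw [hB, Finset.mem_filter] at hp
        have hδ2 : dist p.1 p.2 / 2 = δ := hpδ
        linarith [hp.2, hδ2]
      obtain ⟨t₁, ht₁, ht₁δ⟩ := (csInf_lt_iff ⟨0, fun u hu => hu.1⟩ hne).mp hmδ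
      refine ⟨t₁, ht₁, ?_⟩
      rintro a b ⟨haR, hbR, hd⟩
      refine ⟨haR, hbR, ?_⟩
      by_contra hcon
      push_neg at hcon
      have hab : (a, b) ∈ B := by
        rw [hB, Finset.mem_filter]
        exact ⟨Finset.mem_product.mpr ⟨haR, hbR⟩, hcon⟩
      have : δ ≤ dist a b / 2 :=
        Finset.min'_le _ _ (Finset.mem_image.mpr ⟨(a, b), hab, rfl⟩)
      linarith
    · obtain ⟨t₁, ht₁⟩ := hne
      refine ⟨t₁, ht₁, ?_⟩
      rintro a b ⟨haR, hbR, hd⟩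
      refine ⟨haR, hbR, ?_⟩
      by_contra hcon
      push_neg at hcon
      exact hBne ⟨(a, b), by
        rw [hB, Finset.mem_filter]
        exact ⟨Finset.mem_product.mpr ⟨haR, hbR⟩, hcon⟩⟩
  obtain ⟨t₁, ⟨ht₁0, hyt₁⟩, himp⟩ := key
  exact ⟨hyt₁.1, ReflTransGen.mono himp _ _ hyt₁.2⟩

lemma mergeT_pos {R : Finset V} {x y : V} (hx : x ∈ R) (hy : y ∈ R) (hxy : x ≠ y) :
    0 < mergeT R x y := by
  rcases lt_or_eq_of_le (mergeT_nonneg R x y) with h | h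
  · exact h
  · exfalso
    have := mergeT_mem (R := R) hx hy
    rw [← h] at this
    exact hxy (cmp_zero_subset this).symm

/-! ### stabilized components -/

lemma exists_stable_cmp (R : Finset V) (x : V) (τ : ℝ) (hτ : 0 < τ) :
    ∃ u₀, 0 ≤ u₀ ∧ u₀ < τ ∧ ∀ u, u₀ ≤ u → u < τ → cmp R u x = cmp R u₀ x := by
  set A := (fun u => (cmp R u x).ncard) '' (Set.Ico 0 τ) with hA
  have hAne : A.Nonempty := ⟨(cmp R 0 x).ncard, 0, ⟨le_refl 0, hτ⟩, rfl⟩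
  have hAbdd : BddAbove A := by
    refine ⟨(Set.univ : Set V).ncard, ?_⟩
    rintro a ⟨u, hu, rfl⟩
    exact Set.ncard_le_ncard (Set.subset_univ _) Set.finite_univ
  obtain ⟨u₀, hu₀, hN⟩ := Nat.sSup_mem hAne hAbdd
  refine ⟨u₀, hu₀.1, hu₀.2, ?_⟩
  intro u h₁ h₂
  have hsub : cmp R u₀ x ⊆ cmp R u x := cmp_mono h₁ x
  have hcard : (cmp R u x).ncard ≤ (cmp R u₀ x).ncard := by
    have hN' : (cmp R u₀ x).ncard = sSup A := hN
    rw [hN']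
    exact le_csSup hAbdd ⟨u, ⟨le_trans hu₀.1 h₁, h₂⟩, rfl⟩
  exact (Set.eq_of_subset_of_ncard_le hsub hcard (Set.toFinite _)).symm

/-! ### the certificate set associated to a minimizing terminal pair -/

lemma exists_cert_piece (R : Finset V) (X' : Finset V) (hX'R : X' ⊆ R)
    (x y : V) (hx : x ∈ X') (hy : y ∈ X') (hxy : x ≠ y)
    (hmin : ∀ p ∈ X', ∀ q ∈ X', p ≠ q → mergeT R x y ≤ mergeT R p q) :
    ∃ (S : Set V) (u₀ : ℝ), 0 ≤ u₀ ∧ S = cmp R u₀ x ∧ u₀ < mergeT R x y ∧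
      x ∈ S ∧ (∀ z ∈ X', z ∈ S → z = x) ∧
      deact R S = mergeT R x y ∧
      ReflTransGen (dRel R (mergeT R x y)) x y ∧
      (∀ t, 0 ≤ t → Set.ncard {C : Set V | ∃ s ∈ R, C = cmp R t s} = 1 → mergeT R x y ≤ t) := by
  have hxR : x ∈ R := hX'R hx
  have hyR : y ∈ R := hX'R hy
  set τ := mergeT R x y with hτdef
  have hτpos : 0 < τ := mergeT_pos hxR hyR hxy
  obtain ⟨u₀, hu₀0, hu₀τ, hstab⟩ := exists_stable_cmp R x τ hτpos
  set S := cmp R u₀ x with hSdef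
  have hxS : x ∈ S := mem_cmp_self hxR u₀
  have htrace : ∀ z ∈ X', z ∈ S → z = x := by
    intro z hz hzS
    by_contra hzx
    have h1 : mergeT R x z ≤ u₀ := mergeT_le hu₀0 hzS
    have h2 : τ ≤ mergeT R x z := hmin x hx z hz (fun h => hzx h.symm)
    linarith
  have hyS : y ∉ S := fun h => hxy ((htrace y hy h).symm)
  have hymem : y ∈ cmp R τ x := mergeT_mem hxR hyR
  -- every time at which S is a component is < τ
  have hubound : ∀ t ∈ {t : ℝ | 0 ≤ t ∧ ∃ s ∈ R, S = cmp R t s}, t < τ := by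
    rintro t ⟨ht0, s, hsR, hS⟩
    by_contra hcon
    push_neg at hcon
    have hyt : y ∈ cmp R t x := cmp_mono hcon x hymem
    have hxt : x ∈ cmp R t s := by rw [← hS]; exact hxS
    rw [cmp_eq_of_mem hxt, ← hS] at hyt
    exact hyS hyt
  have hbdd : BddAbove {t : ℝ | 0 ≤ t ∧ ∃ s ∈ R, S = cmp R t s} :=
    ⟨τ, fun t ht => le_of_lt (hubound t ht)⟩
  have hdeact : deact R S = τ := by
    apply le_antisymm
    · exact Real.sSup_le (fun t ht => le_of_lt (hubound t ht)) (le_of_lt hτpos)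
    · by_contra hcon
      push_neg at hcon
      set u := max u₀ ((deact R S + τ) / 2) with hu
      have hdd : deact R S = sSup {t : ℝ | 0 ≤ t ∧ ∃ s ∈ R, S = cmp R t s} := rfl
      have hd0 : 0 ≤ deact R S := by
        have hmem0 : u₀ ∈ {t : ℝ | 0 ≤ t ∧ ∃ s ∈ R, S = cmp R t s} := ⟨hu₀0, x, hxR, rfl⟩
        rw [hdd]
        exact le_trans hu₀0 (le_csSup hbdd hmem0)
      have huu₀ : u₀ ≤ u := le_max_left _ _
      have huτ : u < τ := by
        apply max_lt hu₀τ
        linarith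
      have hu0 : 0 ≤ u := le_trans hu₀0 huu₀
      have hSu : S = cmp R u x := (hstab u huu₀ huτ).symm
      have hmem : u ∈ {t : ℝ | 0 ≤ t ∧ ∃ s ∈ R, S = cmp R t s} := ⟨hu0, x, hxR, hSu⟩
      have h2 : u ≤ deact R S := by rw [hdd]; exact le_csSup hbdd hmem
      have h3 : (deact R S + τ) / 2 ≤ deact R S := le_trans (le_max_right _ _) h2
      linarith
  refine ⟨S, u₀, hu₀0, rfl, hu₀τ, hxS, htrace, hdeact, hymem.2, ?_⟩
  intro t ht0 hncard
  obtain ⟨C, hC⟩ := Set.ncard_eq_one.mp hncard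
  have hCx : cmp R t x ∈ {C : Set V | ∃ s ∈ R, C = cmp R t s} := ⟨x, hxR, rfl⟩
  have hCy : cmp R t y ∈ {C : Set V | ∃ s ∈ R, C = cmp R t s} := ⟨y, hyR, rfl⟩
  rw [hC] at hCx hCy
  have : y ∈ cmp R t x := by
    rw [Set.mem_singleton_iff] at hCx hCy
    rw [hCx, ← hCy]
    exact mem_cmp_self hyR t
  exact mergeT_le ht0 this

/-! ### at large times there is a single component -/

lemma exists_time_one (R : Finset V) (hR : R.Nonempty) :
    ∃ t, 0 ≤ t ∧ Set.ncard {C : Set V | ∃ s ∈ R, C = cmp R t s} = 1 := by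
  have hprodne : (R ×ˢ R).Nonempty := hR.product hR
  set t₀ := ((R ×ˢ R).image (fun p => dist p.1 p.2 / 2)).max' (hprodne.image _) with ht₀
  set t := max t₀ 0 with ht
  have hbig : ∀ s ∈ R, cmp R t s = ↑R := by
    intro s hs
    ext z
    constructor
    · exact fun hz => hz.1
    · intro hz
      refine ⟨hz, ReflTransGen.single ⟨hs, hz, ?_⟩⟩
      have : dist s z / 2 ≤ t₀ := by
        rw [ht₀]
        exact Finset.le_max' ((R ×ˢ R).image (fun p => dist p.1 p.2 / 2)) (dist s z / 2)
          (Finset.mem_image.mpr ⟨(s, z), Finset.mem_product.mpr ⟨hs, hz⟩, rfl⟩)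
      have h2 : t₀ ≤ t := le_max_left _ _
      linarith
  refine ⟨t, le_max_right _ _, ?_⟩
  have : {C : Set V | ∃ s ∈ R, C = cmp R t s} = {(↑R : Set V)} := by
    ext C
    constructor
    · rintro ⟨s, hs, rfl⟩
      exact hbig s hs
    · rintro rfl
      obtain ⟨s, hs⟩ := hR
      exact ⟨s, hs, (hbig s hs).symm⟩
  rw [this, Set.ncard_singleton]

/-! ### upper bound : every certificate value is at most the drop -/

lemma lemmaA (R : Finset V) (hR : R.Nonempty) :
    ∀ (n : ℕ) (X' : Finset V) (cert : Finset (Set V)), X'.card = n → X' ⊆ R → X'.Nonempty →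
      (∀ S ∈ cert, ∃ t : ℝ, ∃ s : V, S = cmp R t s) →
      cert.card = X'.card - 1 →
      (∀ s₁ ∈ X', ∀ s₂ ∈ X', s₁ ≠ s₂ → ∃ S ∈ cert, (s₁ ∈ S ∧ s₂ ∉ S) ∨ (s₂ ∈ S ∧ s₁ ∉ S)) →
      Mc R X' + 2 * ∑ S ∈ cert, deact R S ≤ Mc R ∅ := by
  intro n
  induction n using Nat.strong_induction_on with
  | _ n IH =>
    intro X' cert hcard hX'R hX'ne hcomp hcertcard hsep
    classical
    by_cases hone : X'.card ≤ 1
    · -- base case : X' is a singleton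
      have h1 : X'.card = 1 := le_antisymm hone (Finset.one_le_card.mpr hX'ne)
      obtain ⟨x, rfl⟩ := Finset.card_eq_one.mp h1
      have hc0 : cert = ∅ := Finset.card_eq_zero.mp (by rw [hcertcard, h1])
      subst hc0
      have hMc : Mc R {x} = Mc R ∅ := by
        unfold Mc
        rw [mcSet_subsingleton_eq R {x} (by simp) ∅ (by simp)]
      rw [hMc]
      simp
    · push_neg at hone
      -- find a minimal certificate set meeting X'
      set cert' := cert.filter (fun S => ∃ z ∈ X', z ∈ S) with hcert'
      have hcert'ne : cert'.Nonempty := by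
        obtain ⟨a, ha, b, hb, hab⟩ := Finset.one_lt_card.mp hone
        obtain ⟨T, hT, hTsep⟩ := hsep a ha b hb hab
        rw [hcert']
        rcases hTsep with ⟨h1, h2⟩ | ⟨h1, h2⟩
        · exact ⟨T, Finset.mem_filter.mpr ⟨hT, a, ha, h1⟩⟩
        · exact ⟨T, Finset.mem_filter.mpr ⟨hT, b, hb, h1⟩⟩
      obtain ⟨S, hS', hSmin⟩ : ∃ S ∈ cert', ∀ T ∈ cert', ¬ T < S := by
          obtain ⟨S, hS⟩ := cert'.exists_minimal hcert'ne
          exact ⟨S, hS.1, fun T hT hlt => hlt.not_ge (hS.2 hT hlt.le)⟩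
      have hScert : S ∈ cert := (Finset.mem_filter.mp hS').1
      obtain ⟨x, hxX', hxS⟩ := (Finset.mem_filter.mp hS').2
      -- the trace of S on X' is exactly {x}
      have htrace : ∀ z ∈ X', z ∈ S → z = x := by
        intro z hz hzS
        by_contra hzx
        obtain ⟨T, hTcert, hTsep⟩ := hsep x hxX' z hz (fun h => hzx h.symm)
        obtain ⟨tS, sS, hSc⟩ := hcomp S hScert
        obtain ⟨tT, sT, hTc⟩ := hcomp T hTcert
        have hlam : S ⊆ T ∨ T ⊆ S := by
          rcases hTsep with ⟨h1, h2⟩ | ⟨h1, h2⟩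
          · -- x ∈ T, z ∉ T ; common point x
            rw [hSc, hTc]
            rw [hSc] at hxS; rw [hTc] at h1
            exact cmp_laminar hxS h1
          · -- z ∈ T, x ∉ T ; common point z
            rw [hSc, hTc]
            rw [hSc] at hzS; rw [hTc] at h1
            exact cmp_laminar hzS h1
        rcases hTsep with ⟨h1, h2⟩ | ⟨h1, h2⟩
        · rcases hlam with hl | hl
          · exact h2 (hl hzS)
          · have hTne : T ≠ S := fun h => h2 (h ▸ hzS)
            have hT' : T ∈ cert' := Finset.mem_filter.mpr ⟨hTcert, x, hxX', h1⟩
            exact hSmin T hT' (lt_of_le_of_ne hl hTne)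
        · rcases hlam with hl | hl
          · exact h2 (hl hxS)
          · have hTne : T ≠ S := fun h => h2 (h ▸ hxS)
            have hT' : T ∈ cert' := Finset.mem_filter.mpr ⟨hTcert, z, hz, h1⟩
            exact hSmin T hT' (lt_of_le_of_ne hl hTne)
      obtain ⟨y, hyX', hyx⟩ := Finset.exists_mem_ne hone x
      have hyS : y ∉ S := fun h => hyx (htrace y hyX' h)
      -- apply the step lemma
      have hstep := step_lemma R hR X' hX'R x y hxX' hyX' (fun h => hyx h.symm)
        S hxS hyS (by
          intro z hz hzS
          obtain ⟨hz1, hz2⟩ := Finset.mem_erase.mp hz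
          exact hz1 (htrace z hz2 hzS))
      -- induction hypothesis on X'.erase x and cert.erase S
      have hIH := IH (X'.erase x).card (by
          rw [Finset.card_erase_of_mem hxX', ← hcard]; omega)
        (X'.erase x) (cert.erase S) rfl
        (fun z hz => hX'R (Finset.mem_of_mem_erase hz))
        ⟨y, Finset.mem_erase.mpr ⟨hyx, hyX'⟩⟩
        (fun T hT => hcomp T (Finset.mem_of_mem_erase hT))
        (by
          rw [Finset.card_erase_of_mem hScert, Finset.card_erase_of_mem hxX', hcertcard])
        (by
          intro s₁ h₁ s₂ h₂ h₁₂
          obtain ⟨hs₁x, hs₁⟩ := Finset.mem_erase.mp h₁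
          obtain ⟨hs₂x, hs₂⟩ := Finset.mem_erase.mp h₂
          obtain ⟨T, hT, hTsep⟩ := hsep s₁ hs₁ s₂ hs₂ h₁₂
          refine ⟨T, Finset.mem_erase.mpr ⟨?_, hT⟩, hTsep⟩
          rintro rfl
          rcases hTsep with ⟨h1, _⟩ | ⟨h1, _⟩
          · exact hs₁x (htrace s₁ hs₁ h1)
          · exact hs₂x (htrace s₂ hs₂ h1))
      have hsum : deact R S + ∑ T ∈ cert.erase S, deact R T = ∑ T ∈ cert, deact R T :=
        Finset.add_sum_erase _ _ hScert
      linarith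

/-! ### exact certificate construction -/

lemma lemmaB (R : Finset V) (hR : R.Nonempty) (tmax : ℝ)
    (htmax : tmax = sInf {t : ℝ | 0 ≤ t ∧
      Set.ncard {C : Set V | ∃ s ∈ R, C = cmp R t s} = 1}) :
    ∀ (n : ℕ) (X' : Finset V), X'.card = n → X' ⊆ R → X'.Nonempty →
      ∃ cert : Finset (Set V),
        (∀ S ∈ cert, ∃ t : ℝ, 0 ≤ t ∧ t < tmax ∧ ∃ s ∈ R, S = cmp R t s) ∧
        cert.card = X'.card - 1 ∧
        (∀ s₁ ∈ X', ∀ s₂ ∈ X', s₁ ≠ s₂ →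
          ∃ S ∈ cert, (s₁ ∈ S ∧ s₂ ∉ S) ∨ (s₂ ∈ S ∧ s₁ ∉ S)) ∧
        (∀ S ∈ cert, ∃ z ∈ X', z ∈ S) ∧
        Mc R X' + 2 * ∑ S ∈ cert, deact R S = Mc R ∅ := by
  intro n
  induction n using Nat.strong_induction_on with
  | _ n IH =>
    intro X' hcard hX'R hX'ne
    classical
    by_cases hone : X'.card ≤ 1
    · have h1 : X'.card = 1 := le_antisymm hone (Finset.one_le_card.mpr hX'ne)
      obtain ⟨x, rfl⟩ := Finset.card_eq_one.mp h1
      refine ⟨∅, by simp, by simp, ?_, by simp, ?_⟩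
      · intro s₁ h₁ s₂ h₂ h₁₂
        rw [Finset.mem_singleton] at h₁ h₂
        exact absurd (h₁.trans h₂.symm) h₁₂
      · have hMc : Mc R {x} = Mc R ∅ := by
          unfold Mc
          rw [mcSet_subsingleton_eq R {x} (by simp) ∅ (by simp)]
        rw [hMc]
        simp
    · push_neg at hone
      -- minimizing pair
      set P := (X' ×ˢ X').filter (fun p => p.1 ≠ p.2) with hP
      have hPne : P.Nonempty := by
        obtain ⟨a, ha, b, hb, hab⟩ := Finset.one_lt_card.mp hone
        exact ⟨(a, b), Finset.mem_filter.mpr ⟨Finset.mem_product.mpr ⟨ha, hb⟩, hab⟩⟩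
      obtain ⟨p, hpP, hpmin⟩ := Finset.exists_min_image P (fun p => mergeT R p.1 p.2) hPne
      obtain ⟨hpprod, hpne⟩ := Finset.mem_filter.mp hpP
      obtain ⟨hx, hy⟩ := Finset.mem_product.mp hpprod
      set x := p.1
      set y := p.2
      have hmin : ∀ q ∈ X', ∀ r ∈ X', q ≠ r → mergeT R x y ≤ mergeT R q r := by
        intro q hq r hr hqr
        exact hpmin (q, r) (Finset.mem_filter.mpr ⟨Finset.mem_product.mpr ⟨hq, hr⟩, hqr⟩)
      obtain ⟨S, u₀, hu₀0, hSdef, hu₀τ, hxS, htrace, hdeact, hchain, hτmax⟩ :=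
        exists_cert_piece R X' hX'R x y hx hy hpne hmin
      set τ := mergeT R x y with hτdef
      have hτ0 : 0 ≤ τ := mergeT_nonneg R x y
      -- τ ≤ tmax
      have hτtmax : τ ≤ tmax := by
        rw [htmax]
        refine le_csInf ?_ ?_
        · obtain ⟨t, ht0, ht1⟩ := exists_time_one R hR
          exact ⟨t, ht0, ht1⟩
        · rintro t ⟨ht0, ht1⟩
          exact hτmax t ht0 ht1
      have hu₀tmax : u₀ < tmax := lt_of_lt_of_le hu₀τ hτtmax
      have hyS : y ∉ S := fun h => hpne (htrace y hy h).symm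
      -- Mc equality in one step
      have hstep := step_lemma R hR X' hX'R x y hx hy hpne S hxS hyS (by
        intro z hz hzS
        obtain ⟨hz1, hz2⟩ := Finset.mem_erase.mp hz
        exact hz1 (htrace z hz2 hzS))
      have hadd := add_lemma R hR X' hX'R x y hx hy hpne τ hτ0 hchain
      -- induction hypothesis
      have hIH := IH (X'.erase x).card (by
          rw [Finset.card_erase_of_mem hx, ← hcard]; omega)
        (X'.erase x) rfl (fun z hz => hX'R (Finset.mem_of_mem_erase hz))
        ⟨y, Finset.mem_erase.mpr ⟨fun h => hpne h.symm, hy⟩⟩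
      obtain ⟨cert₂, hc1, hc2, hc3, hc4, hc5⟩ := hIH
      have hSnotin : S ∉ cert₂ := by
        intro hScert₂
        obtain ⟨z, hz, hzS⟩ := hc4 S hScert₂
        obtain ⟨hz1, hz2⟩ := Finset.mem_erase.mp hz
        exact hz1 (htrace z hz2 hzS)
      refine ⟨insert S cert₂, ?_, ?_, ?_, ?_, ?_⟩
      · intro T hT
        rcases Finset.mem_insert.mp hT with rfl | hT'
        · exact ⟨u₀, hu₀0, hu₀tmax, x, hX'R hx, hSdef⟩
        · exact hc1 T hT'
      · rw [Finset.card_insert_of_notMem hSnotin, hc2,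
          Finset.card_erase_of_mem hx]
        omega
      · intro s₁ h₁ s₂ h₂ h₁₂
        by_cases hs₁ : s₁ = x
        · subst hs₁
          refine ⟨S, Finset.mem_insert_self _ _, Or.inl ⟨hxS, ?_⟩⟩
          intro hcon
          exact h₁₂ ((htrace s₂ h₂ hcon).symm)
        · by_cases hs₂ : s₂ = x
          · subst hs₂
            refine ⟨S, Finset.mem_insert_self _ _, Or.inr ⟨hxS, ?_⟩⟩
            intro hcon
            exact h₁₂ (htrace s₁ h₁ hcon)
          · obtain ⟨T, hT, hTsep⟩ := hc3 s₁ (Finset.mem_erase.mpr ⟨hs₁, h₁⟩)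
              s₂ (Finset.mem_erase.mpr ⟨hs₂, h₂⟩) h₁₂
            exact ⟨T, Finset.mem_insert_of_mem hT, hTsep⟩
      · intro T hT
        rcases Finset.mem_insert.mp hT with rfl | hT'
        · exact ⟨x, hx, hxS⟩
        · obtain ⟨z, hz, hzT⟩ := hc4 T hT'
          exact ⟨z, Finset.mem_of_mem_erase hz, hzT⟩
      · rw [Finset.sum_insert hSnotin]
        rw [hdeact]
        linarith

lemma mcSet_empty_eq (R : Finset V) :
    { v : ℝ | ∃ E : Finset (V × V),
        (∀ e ∈ E, e.1 ∈ R ∧ e.2 ∈ R) ∧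
        (∀ s₁ ∈ R, ∀ s₂ ∈ R, Relation.ReflTransGen
          (fun a b => (a, b) ∈ E ∨ (b, a) ∈ E) s₁ s₂) ∧
        v = ∑ e ∈ E, dist e.1 e.2 } = mcSet R ∅ := by
  ext v
  constructor <;> rintro ⟨E, hwf, hconn, rfl⟩
  · exact ⟨E, hwf, fun s₁ h₁ s₂ h₂ =>
      ReflTransGen.mono (fun a b h => Or.inl h) _ _ (hconn s₁ h₁ s₂ h₂), rfl⟩
  · refine ⟨E, hwf, fun s₁ h₁ s₂ h₂ => ?_, rfl⟩
    refine rtg_absorb _ _ ?_ _ _ (hconn s₁ h₁ s₂ h₂)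
    rintro u v ⟨hu, _⟩
    exact absurd hu (Finset.notMem_empty u)

end Stmt13Aux

open Stmt13Aux in
/-- drop(X) := mst(G[R]) − mst(G[R]/X) equals the maximum value 2·∑_{S ∈ cert} d^S over
all drop certificates cert for X; in particular every drop certificate value is a lower
bound on drop(X). -/
theorem stmt_13 {V : Type*} [MetricSpace V] [Fintype V]
    (R X : Finset V) (hXR : X ⊆ R) (hX : X.Nonempty)
    (comp : ℝ → V → Set V)
    (hcomp : ∀ t s, comp t s = {s' | s' ∈ R ∧
      Relation.ReflTransGen (fun a b => a ∈ R ∧ b ∈ R ∧ dist a b ≤ 2 * t) s s'})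
    (ncomp : ℝ → ℕ)
    (hncomp : ∀ t, ncomp t = Set.ncard {C : Set V | ∃ s ∈ R, C = comp t s})
    (tmax : ℝ) (htmax : tmax = sInf {t : ℝ | 0 ≤ t ∧ ncomp t = 1})
    (dS : Set V → ℝ)
    (hdS : ∀ S : Set V, dS S = sSup {t : ℝ | 0 ≤ t ∧ ∃ s ∈ R, S = comp t s})
    (mstCost : ℝ)
    (hmst : IsLeast { v : ℝ | ∃ E : Finset (V × V),
        (∀ e ∈ E, e.1 ∈ R ∧ e.2 ∈ R) ∧
        (∀ s₁ ∈ R, ∀ s₂ ∈ R, Relation.ReflTransGen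
          (fun a b => (a, b) ∈ E ∨ (b, a) ∈ E) s₁ s₂) ∧
        v = ∑ e ∈ E, dist e.1 e.2 } mstCost)
    (mstCostX : ℝ)
    (hmstX : IsLeast { v : ℝ | ∃ E : Finset (V × V),
        (∀ e ∈ E, e.1 ∈ R ∧ e.2 ∈ R) ∧
        (∀ s₁ ∈ R, ∀ s₂ ∈ R, Relation.ReflTransGen
          (fun a b => ((a, b) ∈ E ∨ (b, a) ∈ E) ∨ (a ∈ X ∧ b ∈ X)) s₁ s₂) ∧
        v = ∑ e ∈ E, dist e.1 e.2 } mstCostX) :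
    IsGreatest { v : ℝ | ∃ cert : Finset (Set V),
        (∀ S ∈ cert, ∃ t : ℝ, 0 ≤ t ∧ t < tmax ∧ ∃ s ∈ R, S = comp t s) ∧
        cert.card = X.card - 1 ∧
        (∀ s₁ ∈ X, ∀ s₂ ∈ X, s₁ ≠ s₂ →
          ∃ S ∈ cert, (s₁ ∈ S ∧ s₂ ∉ S) ∨ (s₂ ∈ S ∧ s₁ ∉ S)) ∧
        v = 2 * ∑ S ∈ cert, dS S } (mstCost - mstCostX) := by
  classical
  have hRne : R.Nonempty := hX.mono hXR
  have hcmp : ∀ t s, comp t s = cmp R t s := hcomp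
  have hdS' : ∀ S : Set V, dS S = deact R S := by
    intro S
    rw [hdS S]
    unfold deact
    congr 1
    ext t
    simp only [hcmp]
  have htmax' : tmax = sInf {t : ℝ | 0 ≤ t ∧
      Set.ncard {C : Set V | ∃ s ∈ R, C = cmp R t s} = 1} := by
    rw [htmax]
    congr 1
    ext t
    simp only [hncomp, hcmp]
  have hMcEmpty : mstCost = Mc R ∅ := by
    refine IsLeast.unique hmst ?_
    rw [mcSet_empty_eq R]
    exact isLeast_Mc R hRne ∅
  have hMcX : mstCostX = Mc R X := IsLeast.unique hmstX (isLeast_Mc R hRne X)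
  constructor
  · -- membership : an optimal certificate exists
    obtain ⟨cert, hc1, hc2, hc3, -, hc5⟩ := lemmaB R hRne tmax htmax' X.card X rfl hXR hX
    refine ⟨cert, ?_, hc2, hc3, ?_⟩
    · intro S hS
      obtain ⟨t, ht0, httmax, s, hsR, hScmp⟩ := hc1 S hS
      exact ⟨t, ht0, httmax, s, hsR, by rw [hcmp]; exact hScmp⟩
    · have hsum : ∑ S ∈ cert, dS S = ∑ S ∈ cert, deact R S :=
        Finset.sum_congr rfl (fun S _ => hdS' S)
      rw [hsum, hMcEmpty, hMcX]
      linarith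
  · -- upper bound
    rintro v ⟨cert, hc1, hc2, hc3, rfl⟩
    have hA := lemmaA R hRne X.card X cert rfl hXR hX
      (fun S hS => by
        obtain ⟨t, ht0, httmax, s, hsR, hScmp⟩ := hc1 S hS
        exact ⟨t, s, by rw [← hcmp]; exact hScmp⟩)
      hc2 hc3
    have hsum : ∑ S ∈ cert, dS S = ∑ S ∈ cert, deact R S :=
      Finset.sum_congr rfl (fun S _ => hdS' S)
    rw [hsum, hMcEmpty, hMcX]
    linarith
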